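/- For an odd prime p and integer m not divisible by p, the sign of the permutation of Z/pZ given by multiplication by m equals the Legendre symbol (m/p). -/

import Mathlib

open Equiv Equiv.Perm

section aux

variable {p : ℕ} [Fact p.Prime]

private lemma mulLeft₀_pow_apply (a : ZMod p) (ha : a ≠ 0) (k : ℕ) (x : ZMod p) :
    ((Equiv.mulLeft₀ a ha) ^ k) x = a ^ k * x := by
  induction k generalizing x with
  | zero => simp
  | succ n ih =>
    rw [pow_succ, Equiv.Perm.mul_apply]
    simp only [Equiv.mulLeft₀_apply]
    rw [ih, pow_succ]
    ring

private lemma sign_mulLeft₀_mul (a b : ZMod p) (ha : a ≠ 0) (hb : b ≠ 0) :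
    Equiv.Perm.sign (Equiv.mulLeft₀ (a * b) (mul_ne_zero ha hb)) =
      Equiv.Perm.sign (Equiv.mulLeft₀ a ha) * Equiv.Perm.sign (Equiv.mulLeft₀ b hb) := by
  rw [← map_mul]
  congr 1
  ext x
  simp [mul_assoc]

private lemma sign_generator (hp : p ≠ 2) (g : (ZMod p)ˣ)
    (hg : ∀ x : (ZMod p)ˣ, x ∈ Subgroup.zpowers g) :
    Equiv.Perm.sign (Equiv.mulLeft₀ (g : ZMod p) g.ne_zero) = -1 := by
  have hcard : Fintype.card (ZMod p)ˣ = p - 1 :=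
    ZMod.card_units_eq_totient p ▸ p.totient_prime (Fact.out)
  have horder : orderOf g = p - 1 := by
    rw [← hcard, ← Nat.card_eq_fintype_card]
    exact orderOf_eq_card_of_forall_mem_zpowers hg
  have hp1 : 2 < p := lt_of_le_of_ne (Fact.out : p.Prime).two_le (Ne.symm hp)
  have hgne1 : (g : ZMod p) ≠ 1 := by
    intro h
    have : g = 1 := Units.ext h
    rw [this, orderOf_one] at horder
    omega
  set f := Equiv.mulLeft₀ (g : ZMod p) g.ne_zero with hf
  have hcyc : f.IsCycle := by
    refine ⟨1, ?_, ?_⟩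
    · simpa [hf, Equiv.mulLeft₀_apply] using hgne1
    · intro y hy
      have hy0 : y ≠ 0 := by
        intro h; apply hy; simp [hf, h]
      lift y to (ZMod p)ˣ using isUnit_iff_ne_zero.mpr hy0
      obtain ⟨k, hk⟩ := mem_powers_iff_mem_zpowers.mpr (hg y)
      refine ⟨(k : ℤ), ?_⟩
      rw [zpow_natCast, mulLeft₀_pow_apply, mul_one]
      exact_mod_cast hk
  have hsupp : f.support = Finset.univ \ {0} := by
    ext x
    simp only [Equiv.Perm.mem_support, Finset.mem_sdiff, Finset.mem_univ, Finset.mem_singleton,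
      true_and, hf, Equiv.mulLeft₀_apply]
    constructor
    · intro h hx; apply h; simp [hx]
    · intro hx h
      apply hgne1
      have h' : ((g : ZMod p) - 1) * x = 0 := by ring_nf; linear_combination h
      rcases mul_eq_zero.mp h' with h'' | h''
      · linear_combination h''
      · exact absurd h'' hx
  have hcardsupp : f.support.card = p - 1 := by
    rw [hsupp, Finset.card_sdiff_of_subset (by simp), Finset.card_univ, ZMod.card, Finset.card_singleton]
  have heven : Even (p - 1) := by
    rcases (Fact.out : p.Prime).eq_two_or_odd' with h | h
    · exact absurd h hp
    · exact Nat.Odd.sub_odd h odd_one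
  rw [hcyc.sign, hcardsupp, heven.neg_one_pow]

private lemma key (hp : p ≠ 2) (u : (ZMod p)ˣ) :
    ((Equiv.Perm.sign (Equiv.mulLeft₀ (u : ZMod p) u.ne_zero) : ℤˣ) : ℤ) =
      quadraticChar (ZMod p) (u : ZMod p) := by
  obtain ⟨g, hg⟩ := IsCyclic.exists_generator (α := (ZMod p)ˣ)
  have hchar : ringChar (ZMod p) ≠ 2 := by
    rw [ZMod.ringChar_zmod_n]; exact hp
  have hp2 : 2 < p := lt_of_le_of_ne (Fact.out : p.Prime).two_le (Ne.symm hp)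
  have hgsq : ¬ IsSquare ((g : ZMod p)) := by
    intro hsq
    have hcard : Fintype.card (ZMod p)ˣ = p - 1 :=
      ZMod.card_units_eq_totient p ▸ p.totient_prime (Fact.out)
    have horder : orderOf g = p - 1 := by
      rw [← hcard, ← Nat.card_eq_fintype_card]
      exact orderOf_eq_card_of_forall_mem_zpowers hg
    rw [FiniteField.isSquare_iff hchar g.ne_zero] at hsq
    have h2 : g ^ (Fintype.card (ZMod p) / 2) = 1 := by
      ext; push_cast; simpa using hsq
    have h3 := orderOf_dvd_of_pow_eq_one h2
    rw [horder, ZMod.card] at h3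
    have hple := Nat.le_of_dvd (by omega) h3
    omega
  have hqg : quadraticChar (ZMod p) (g : ZMod p) = -1 :=
    quadraticChar_neg_one_iff_not_isSquare.mpr hgsq
  have hsg := sign_generator hp g hg
  obtain ⟨k, hk⟩ := mem_powers_iff_mem_zpowers.mpr (hg u)
  subst hk
  have hL : ∀ n : ℕ, ((Equiv.Perm.sign (Equiv.mulLeft₀ ((g ^ n : (ZMod p)ˣ) : ZMod p)
      (g ^ n : (ZMod p)ˣ).ne_zero) : ℤˣ) : ℤ) = (-1 : ℤ) ^ n := by
    intro n
    induction n with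
    | zero =>
      simp only [pow_zero]
      have : Equiv.mulLeft₀ ((1 : (ZMod p)ˣ) : ZMod p) (1 : (ZMod p)ˣ).ne_zero = Equiv.refl _ := by
        ext x; simp
      rw [this]; simp
    | succ n ih =>
      have hcast : ((g ^ (n+1) : (ZMod p)ˣ) : ZMod p)
          = (g : ZMod p) * ((g ^ n : (ZMod p)ˣ) : ZMod p) := by
        push_cast; ring
      have hrw : Equiv.mulLeft₀ ((g ^ (n+1) : (ZMod p)ˣ) : ZMod p) (g ^ (n+1) : (ZMod p)ˣ).ne_zero
          = Equiv.mulLeft₀ ((g : ZMod p) * ((g ^ n : (ZMod p)ˣ) : ZMod p))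
            (mul_ne_zero g.ne_zero (g ^ n : (ZMod p)ˣ).ne_zero) := by
        ext x; simp [hcast]
      rw [hrw, sign_mulLeft₀_mul _ _ g.ne_zero (g ^ n : (ZMod p)ˣ).ne_zero, hsg]
      simp only [Units.val_mul, Units.val_neg, Units.val_one]
      rw [ih, pow_succ]
      ring
  rw [hL k]
  have : quadraticChar (ZMod p) ((g ^ k : (ZMod p)ˣ) : ZMod p)
      = (quadraticChar (ZMod p) (g : ZMod p)) ^ k := by
    push_cast
    exact map_pow _ _ _
  rw [this, hqg]

end aux

/-- Zolotarev's lemma: for an odd prime `p` and an integer `m` not divisible by `p`,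
the sign of the permutation of `ZMod p` given by multiplication by `m` equals the
Legendre symbol `(m/p)`. -/
theorem zolotarev (p : ℕ) [Fact p.Prime] (hp : p ≠ 2) (m : ℤ) (hm : ¬ ((p : ℤ) ∣ m)) :
    ((Equiv.Perm.sign
        (Equiv.mulLeft₀ (m : ZMod p)
          (fun h => hm ((ZMod.intCast_zmod_eq_zero_iff_dvd m p).mp h))) : ℤˣ) : ℤ) =
      legendreSym p m := by
  have h0 : (m : ZMod p) ≠ 0 := fun h => hm ((ZMod.intCast_zmod_eq_zero_iff_dvd m p).mp h)
  have := key hp (Units.mk0 (m : ZMod p) h0)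
  simp only [Units.val_mk0] at this
  rw [this]
  rfl
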